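/- Let G_• be a filtration of length d on a nilpotent finite-dimensional real Lie group G, and let Γ ≤ G be a discrete subgroup with G/Γ compact such that G_• is Γ-rational. Then a map f : 𝓕∅ → G is polynomial with respect to G_• if and only if for every k ≥ 1 and every parallelepiped (α_ω)_{ω ∈ {0,1}^k} in 𝓕∅, the cube (f(α_ω))_{ω ∈ {0,1}^k} belongs to the Host–Kra cube group HK^k(G_•). -/

import Mathlib

/-- Auxiliary definition of polynomial maps `𝓕∅ → G` with respect to a prefiltration
`G_•` (given as a sequence of subgroups of an ambient group), with recursion depth `n`:
at depth `0` the prefiltration must be trivial and the map constantly `1`; at depth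
`n + 1` the map takes values in `G_0` and all its discrete derivatives
`D_β f (α) = f(α)⁻¹ · f(α ∪ β)` (for `β` non-empty and `α` disjoint from `β`) agree with
maps that are polynomial of depth `n` with respect to the shifted prefiltration `G_{•+1}`. -/
def PolyAux {G : Type*} [Group G] : ℕ → (ℕ → Subgroup G) → (Finset ℕ → G) → Prop
  | 0, Gs, f => Gs 0 = ⊥ ∧ ∀ α : Finset ℕ, f α = 1
  | n + 1, Gs, f => (∀ α : Finset ℕ, f α ∈ Gs 0) ∧
      ∀ β : Finset ℕ, β.Nonempty →
        ∃ Df : Finset ℕ → G, PolyAux n (fun i => Gs (i + 1)) Df ∧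
          ∀ α : Finset ℕ, Disjoint α β → Df α = (f α)⁻¹ * f (α ∪ β)

/-- `f ∈ poly(𝓕∅ → G_•)`: `f` is polynomial with respect to the (terminating)
prefiltration `G_•`. -/
def IsPolySeq {G : Type*} [Group G] (Gs : ℕ → Subgroup G) (f : Finset ℕ → G) : Prop :=
  ∃ n : ℕ, PolyAux n Gs f

/-- `f ∈ poly(𝓕∅ → G_•/Γ)`: `f = π ∘ g` for some `g ∈ poly(𝓕∅ → G_•)`, where
`π : G → G/Γ` is the quotient map. -/
def IsPolyQuot {G : Type*} [Group G] (Gs : ℕ → Subgroup G) (Γ : Subgroup G)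
    (f : Finset ℕ → G ⧸ Γ) : Prop :=
  ∃ g : Finset ℕ → G, IsPolySeq Gs g ∧ ∀ α : Finset ℕ, f α = QuotientGroup.mk (g α)

/-- The number of coordinates of `ω ∈ {0,1}^k` equal to `1`. -/
def cubeWeight {k : ℕ} (ω : Fin k → Bool) : ℕ :=
  (Finset.univ.filter fun i => ω i = true).card

/-- The Host–Kra cube group `HK^k(G_•)`: the subgroup of `G^{{0,1}^k}` generated by the
upper-face elements `g^{[ω]}` (equal to `g` on `{σ : σ ≥ ω}` and `1` elsewhere) with
`g ∈ G_{|ω|}`. -/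
def HKGroup {G : Type*} [Group G] (k : ℕ) (Gs : ℕ → Subgroup G) :
    Subgroup ((Fin k → Bool) → G) :=
  Subgroup.closure {x | ∃ (ω : Fin k → Bool) (g : G), g ∈ Gs (cubeWeight ω) ∧
    x = fun σ => if ∀ i, ω i ≤ σ i then g else 1}

/-- Parallelepipeds in `𝓕∅`: families `(α_ω)_{ω ∈ {0,1}^k}` with
`α_ω = α_0 ∪ ⋃_{i : ω_i = 1} α_i` for pairwise disjoint finite sets `α_0, α_1, …, α_k`. -/
def IsParallelepiped (k : ℕ) (A : (Fin k → Bool) → Finset ℕ) : Prop :=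
  ∃ (a : Finset ℕ) (b : Fin k → Finset ℕ),
    (∀ i, Disjoint a (b i)) ∧ (Pairwise fun i j => Disjoint (b i) (b j)) ∧
    ∀ ω : Fin k → Bool, A ω = a ∪ (Finset.univ.filter fun i => ω i = true).biUnion b


namespace S5
open Finset
open scoped commutatorElement
variable {G : Type*} [Group G]

def cubeGen {k : ℕ} (ω : Fin k → Bool) (g : G) : (Fin k → Bool) → G :=
  fun σ => if ∀ i, ω i ≤ σ i then g else 1

lemma cubeGen_mem {k : ℕ} {Gs : ℕ → Subgroup G} {ω : Fin k → Bool} {g : G}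
    (hg : g ∈ Gs (cubeWeight ω)) : cubeGen ω g ∈ HKGroup k Gs :=
  Subgroup.subset_closure ⟨ω, g, hg, rfl⟩

lemma cubeGen_inv {k : ℕ} (ω : Fin k → Bool) (g : G) :
    (cubeGen ω g)⁻¹ = cubeGen ω g⁻¹ := by
  funext σ; simp [cubeGen, apply_ite Inv.inv]

lemma HK_induction {k : ℕ} {Gs : ℕ → Subgroup G} {p : ((Fin k → Bool) → G) → Prop}
    (gen : ∀ (ω : Fin k → Bool) (g : G), g ∈ Gs (cubeWeight ω) → p (cubeGen ω g))
    (one : p 1) (mul : ∀ x y, p x → p y → p (x * y)) (inv : ∀ x, p x → p x⁻¹)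
    {x} (hx : x ∈ HKGroup k Gs) : p x := by
  refine Subgroup.closure_induction (fun x hx => ?_) one (fun x y _ _ => mul x y)
    (fun x _ => inv x) hx
  obtain ⟨ω, g, hg, rfl⟩ := hx
  exact gen ω g hg

lemma cubeWeight_zero (ω : Fin 0 → Bool) : cubeWeight ω = 0 := by
  simp [cubeWeight]

lemma cubeWeight_snoc {k : ℕ} (ω : Fin k → Bool) (t : Bool) :
    cubeWeight (Fin.snoc ω t) = cubeWeight ω + (if t = true then 1 else 0) := by
  simp only [cubeWeight, Finset.card_filter, Fin.sum_univ_castSucc, Fin.snoc_castSucc,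
    Fin.snoc_last]

lemma cubeWeight_or_le {k : ℕ} (ω τ : Fin k → Bool) :
    cubeWeight (fun i => ω i || τ i) ≤ cubeWeight ω + cubeWeight τ := by
  refine le_trans (Finset.card_le_card ?_) (Finset.card_union_le _ _)
  intro i hi
  simp only [Finset.mem_filter, Finset.mem_union, Finset.mem_univ, true_and,
    Bool.or_eq_true] at *
  tauto

lemma forall_or_le {k : ℕ} (ω τ σ : Fin k → Bool) :
    (∀ i, (ω i || τ i) ≤ σ i) ↔ (∀ i, ω i ≤ σ i) ∧ (∀ i, τ i ≤ σ i) := by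
  rw [← forall_and]
  refine forall_congr' fun i => ?_
  cases ω i <;> cases τ i <;> cases σ i <;> simp

lemma conj_cubeGen {k : ℕ} (ω τ : Fin k → Bool) (g h : G) :
    cubeGen ω g * cubeGen τ h * (cubeGen ω g)⁻¹ =
      cubeGen τ h * cubeGen (fun i => ω i || τ i) (h⁻¹ * (g * h * g⁻¹)) := by
  funext σ
  simp only [cubeGen_inv, Pi.mul_apply, cubeGen, forall_or_le]
  by_cases h1 : ∀ i, ω i ≤ σ i <;> by_cases h2 : ∀ i, τ i ≤ σ i <;>
    simp [h1, h2] <;> group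


lemma conj_mem_HK {k : ℕ} {Gs : ℕ → Subgroup G} (hanti : Antitone Gs)
    (hcomm : ∀ i j, ⁅Gs i, Gs j⁆ ≤ Gs (i + j)) :
    ∀ x ∈ HKGroup k Gs, ∀ y ∈ HKGroup k (fun i => Gs (i + 1)),
      x * y * x⁻¹ ∈ HKGroup k (fun i => Gs (i + 1)) := by
  have gen : ∀ (ω : Fin k → Bool) (g : G), g ∈ Gs (cubeWeight ω) →
      ∀ y ∈ HKGroup k (fun i => Gs (i + 1)),
        cubeGen ω g * y * (cubeGen ω g)⁻¹ ∈ HKGroup k (fun i => Gs (i + 1)) := by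
    intro ω g hg y hy
    refine HK_induction (p := fun y => cubeGen ω g * y * (cubeGen ω g)⁻¹ ∈
        HKGroup k (fun i => Gs (i + 1)))
      (fun τ h hh => ?_) ?_ (fun y z hy hz => ?_) (fun y hy => ?_) hy
    · show cubeGen ω g * cubeGen τ h * (cubeGen ω g)⁻¹ ∈ _
      rw [conj_cubeGen]
      refine mul_mem (cubeGen_mem hh) (cubeGen_mem ?_)
      have e : h⁻¹ * (g * h * g⁻¹) = ⁅h⁻¹, g⁆ := by group
      rw [e]
      have m : ⁅h⁻¹, g⁆ ∈ Gs (cubeWeight τ + 1 + cubeWeight ω) :=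
        hcomm _ _ (Subgroup.commutator_mem_commutator (inv_mem hh) hg)
      exact hanti (by have := cubeWeight_or_le ω τ; omega) m
    · simpa using one_mem _
    · have e : cubeGen ω g * (y * z) * (cubeGen ω g)⁻¹ =
          (cubeGen ω g * y * (cubeGen ω g)⁻¹) * (cubeGen ω g * z * (cubeGen ω g)⁻¹) := by
        group
      show cubeGen ω g * (y * z) * (cubeGen ω g)⁻¹ ∈ _
      rw [e]; exact mul_mem hy hz
    · have e : cubeGen ω g * y⁻¹ * (cubeGen ω g)⁻¹ =
          (cubeGen ω g * y * (cubeGen ω g)⁻¹)⁻¹ := by group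
      show cubeGen ω g * y⁻¹ * (cubeGen ω g)⁻¹ ∈ _
      rw [e]; exact inv_mem hy
  intro x hx
  have main : ∀ y ∈ HKGroup k (fun i => Gs (i + 1)),
      x * y * x⁻¹ ∈ HKGroup k (fun i => Gs (i + 1)) ∧
      x⁻¹ * y * x ∈ HKGroup k (fun i => Gs (i + 1)) := by
    refine HK_induction (p := fun x => ∀ y ∈ HKGroup k (fun i => Gs (i + 1)),
        x * y * x⁻¹ ∈ HKGroup k (fun i => Gs (i + 1)) ∧
        x⁻¹ * y * x ∈ HKGroup k (fun i => Gs (i + 1)))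
      (fun ω g hg y hy => ?_) (fun y hy => ?_) (fun a b ha hb y hy => ?_)
      (fun a ha y hy => ?_) hx
    · refine ⟨gen ω g hg y hy, ?_⟩
      have := gen ω g⁻¹ (inv_mem hg) y hy
      rw [cubeGen_inv, inv_inv] at this
      rw [cubeGen_inv]
      exact this
    · simpa using hy
    · constructor
      · have e : a * b * y * (a * b)⁻¹ = a * (b * y * b⁻¹) * a⁻¹ := by group
        rw [e]; exact (ha _ ((hb y hy).1)).1
      · have e : (a * b)⁻¹ * y * (a * b) = b⁻¹ * (a⁻¹ * y * a) * b := by group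
        rw [e]; exact (hb _ ((ha y hy).2)).2
    · constructor
      · simpa using (ha y hy).2
      · simpa using (ha y hy).1
  exact fun y hy => (main y hy).1

def ιf {k : ℕ} (c : (Fin k → Bool) → G) : (Fin (k + 1) → Bool) → G :=
  fun σ => c (Fin.init σ)

def upf {k : ℕ} (c : (Fin k → Bool) → G) : (Fin (k + 1) → Bool) → G :=
  fun σ => if σ (Fin.last k) = true then c (Fin.init σ) else 1

lemma le_snoc_iff {k : ℕ} (ω : Fin k → Bool) (t : Bool) (σ : Fin (k + 1) → Bool) :
    (∀ i, (Fin.snoc ω t : Fin (k + 1) → Bool) i ≤ σ i) ↔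
      (∀ j, ω j ≤ Fin.init σ j) ∧ t ≤ σ (Fin.last k) := by
  constructor
  · intro h
    refine ⟨fun j => ?_, by simpa using h (Fin.last k)⟩
    have := h j.castSucc
    simpa [Fin.init, Fin.snoc_castSucc] using this
  · rintro ⟨h1, h2⟩ i
    refine Fin.lastCases (motive := fun i => (Fin.snoc ω t : Fin (k + 1) → Bool) i ≤ σ i)
      ?_ (fun j => ?_) i
    · simpa using h2
    · have := h1 j
      simpa [Fin.init, Fin.snoc_castSucc] using this

lemma ιf_cubeGen {k : ℕ} (ω : Fin k → Bool) (g : G) :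
    ιf (cubeGen ω g) = cubeGen (Fin.snoc ω false) g := by
  funext σ
  show (if ∀ i, ω i ≤ Fin.init σ i then g else 1) = _
  simp [cubeGen, le_snoc_iff, Bool.false_le]

lemma upf_cubeGen {k : ℕ} (ω : Fin k → Bool) (g : G) :
    upf (cubeGen ω g) = cubeGen (Fin.snoc ω true) g := by
  funext σ
  by_cases hl : σ (Fin.last k) = true <;> by_cases h : ∀ j, ω j ≤ Fin.init σ j <;>
    simp [upf, cubeGen, le_snoc_iff, hl, h] <;> rw [if_neg (by decide)]

lemma ιf_one {k : ℕ} : ιf (1 : (Fin k → Bool) → G) = 1 := rfl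

lemma ιf_mul {k : ℕ} (x y : (Fin k → Bool) → G) : ιf (x * y) = ιf x * ιf y := rfl

lemma upf_one {k : ℕ} : upf (1 : (Fin k → Bool) → G) = 1 := by
  funext σ; simp [upf]

lemma upf_mul {k : ℕ} (x y : (Fin k → Bool) → G) : upf (x * y) = upf x * upf y := by
  funext σ; by_cases hl : σ (Fin.last k) = true <;> simp [upf, hl]

lemma upf_inv {k : ℕ} (x : (Fin k → Bool) → G) : upf x⁻¹ = (upf x)⁻¹ := by
  funext σ; by_cases hl : σ (Fin.last k) = true <;> simp [upf, hl]

lemma ιf_mem {k : ℕ} {Gs : ℕ → Subgroup G} {c : (Fin k → Bool) → G}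
    (hc : c ∈ HKGroup k Gs) : ιf c ∈ HKGroup (k + 1) Gs := by
  refine HK_induction (p := fun c => ιf c ∈ HKGroup (k + 1) Gs)
    (fun ω g hg => ?_) ?_ (fun x y hx hy => ?_) (fun x hx => ?_) hc
  · show ιf (cubeGen ω g) ∈ _
    rw [ιf_cubeGen]
    refine cubeGen_mem ?_
    rwa [cubeWeight_snoc, if_neg (by simp), add_zero]
  · show ιf (1 : (Fin k → Bool) → G) ∈ _
    rw [ιf_one]; exact one_mem _
  · show ιf (x * y) ∈ _
    rw [ιf_mul]; exact mul_mem hx hy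
  · exact inv_mem hx
lemma upf_mem {k : ℕ} {Gs : ℕ → Subgroup G} {c : (Fin k → Bool) → G}
    (hc : c ∈ HKGroup k (fun i => Gs (i + 1))) : upf c ∈ HKGroup (k + 1) Gs := by
  refine HK_induction (p := fun c => upf c ∈ HKGroup (k + 1) Gs)
    (fun ω g hg => ?_) ?_ (fun x y hx hy => ?_) (fun x hx => ?_) hc
  · show upf (cubeGen ω g) ∈ _
    rw [upf_cubeGen]
    refine cubeGen_mem ?_
    rwa [cubeWeight_snoc, if_pos rfl]
  · show upf (1 : (Fin k → Bool) → G) ∈ _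
    rw [upf_one]; exact one_mem _
  · show upf (x * y) ∈ _
    rw [upf_mul]; exact mul_mem hx hy
  · show upf x⁻¹ ∈ _
    rw [upf_inv]; exact inv_mem hx

lemma HK_zero_eval {Gs : ℕ → Subgroup G} {c : (Fin 0 → Bool) → G}
    (hc : c ∈ HKGroup 0 Gs) (σ : Fin 0 → Bool) : c σ ∈ Gs 0 := by
  refine HK_induction (p := fun c => c σ ∈ Gs 0)
    (fun ω g hg => ?_) ?_ (fun x y hx hy => ?_) (fun x hx => ?_) hc
  · rw [cubeWeight_zero] at hg
    simp only [cubeGen]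
    split <;> [exact hg; exact one_mem _]
  · exact one_mem _
  · exact mul_mem hx hy
  · exact inv_mem hx

lemma HK_split {k : ℕ} {Gs : ℕ → Subgroup G} (hanti : Antitone Gs)
    (hcomm : ∀ i j, ⁅Gs i, Gs j⁆ ≤ Gs (i + j)) {c : (Fin (k + 1) → Bool) → G}
    (hc : c ∈ HKGroup (k + 1) Gs) :
    ∃ c₀ ∈ HKGroup k Gs, ∃ c₁ ∈ HKGroup k (fun i => Gs (i + 1)), c = ιf c₀ * upf c₁ := by
  refine HK_induction (p := fun c => ∃ c₀ ∈ HKGroup k Gs,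
      ∃ c₁ ∈ HKGroup k (fun i => Gs (i + 1)), c = ιf c₀ * upf c₁)
    (fun ρ g hg => ?_) ?_ (fun x y hx hy => ?_) (fun x hx => ?_) hc
  · cases hval : ρ (Fin.last k) with
    | false =>
      have hρ : ρ = Fin.snoc (Fin.init ρ) false := by
        rw [← hval]; exact (Fin.snoc_init_self ρ).symm
      refine ⟨cubeGen (Fin.init ρ) g, cubeGen_mem ?_, 1, one_mem _, ?_⟩
      · have hw := hg
        rw [hρ, cubeWeight_snoc, if_neg (by simp), add_zero] at hw
        exact hw
      · rw [upf_one, mul_one, ιf_cubeGen, ← hρ]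
    | true =>
      have hρ : ρ = Fin.snoc (Fin.init ρ) true := by
        rw [← hval]; exact (Fin.snoc_init_self ρ).symm
      refine ⟨1, one_mem _, cubeGen (Fin.init ρ) g, cubeGen_mem ?_, ?_⟩
      · have hw := hg
        rw [hρ, cubeWeight_snoc, if_pos rfl] at hw
        exact hw
      · rw [ιf_one, one_mul, upf_cubeGen, ← hρ]
  · exact ⟨1, one_mem _, 1, one_mem _, by rw [ιf_one, upf_one, mul_one]⟩
  · obtain ⟨c₀, h₀, c₁, h₁, rfl⟩ := hx
    obtain ⟨d₀, k₀, d₁, k₁, rfl⟩ := hy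
    refine ⟨c₀ * d₀, mul_mem h₀ k₀, (d₀⁻¹ * c₁ * d₀) * d₁, mul_mem ?_ k₁, ?_⟩
    · have := conj_mem_HK hanti hcomm d₀⁻¹ (inv_mem k₀) c₁ h₁
      rwa [inv_inv] at this
    · funext σ
      by_cases hl : σ (Fin.last k) = true <;>
        simp [ιf, upf, hl, mul_assoc]
  · obtain ⟨c₀, h₀, c₁, h₁, rfl⟩ := hx
    refine ⟨c₀⁻¹, inv_mem h₀, c₀ * c₁⁻¹ * c₀⁻¹,
      conj_mem_HK hanti hcomm c₀ h₀ c₁⁻¹ (inv_mem h₁), ?_⟩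
    funext σ
    by_cases hl : σ (Fin.last k) = true <;>
      simp [ιf, upf, hl, mul_assoc]

lemma biUnion_filter_snoc {k : ℕ} (ω : Fin k → Bool) (t : Bool) (b : Fin (k + 1) → Finset ℕ) :
    (Finset.univ.filter fun i => (Fin.snoc ω t : Fin (k + 1) → Bool) i = true).biUnion b =
      ((Finset.univ.filter fun j => ω j = true).biUnion fun j => b j.castSucc) ∪
        (if t = true then b (Fin.last k) else ∅) := by
  ext x
  simp only [Finset.mem_biUnion, Finset.mem_filter, Finset.mem_univ, true_and,
    Finset.mem_union]
  constructor
  · rintro ⟨i, hi, hx⟩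
    refine Fin.lastCases (motive := fun i =>
        (Fin.snoc ω t : Fin (k + 1) → Bool) i = true → x ∈ b i →
          (∃ j, ω j = true ∧ x ∈ b j.castSucc) ∨ x ∈ if t = true then b (Fin.last k) else ∅)
      ?_ (fun j => ?_) i hi hx
    · intro hi hx
      rw [Fin.snoc_last] at hi
      right; rw [if_pos hi]; exact hx
    · intro hi hx
      rw [Fin.snoc_castSucc] at hi
      exact Or.inl ⟨j, hi, hx⟩
  · rintro (⟨j, hj, hx⟩ | hx)
    · exact ⟨j.castSucc, by rwa [Fin.snoc_castSucc], hx⟩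
    · cases t with
      | false => simp at hx
      | true =>
        refine ⟨Fin.last k, ?_, ?_⟩
        · rw [Fin.snoc_last]
        · simpa using hx

lemma cube_set_eq {k : ℕ} (σ : Fin (k + 1) → Bool) (a : Finset ℕ) (b : Fin (k + 1) → Finset ℕ) :
    a ∪ (Finset.univ.filter fun i => σ i = true).biUnion b =
      (a ∪ (Finset.univ.filter fun j => Fin.init σ j = true).biUnion fun j => b j.castSucc) ∪
        (if σ (Fin.last k) = true then b (Fin.last k) else ∅) := by
  conv_lhs => rw [← Fin.snoc_init_self σ]
  rw [biUnion_filter_snoc, Finset.union_assoc]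

lemma poly_cube : ∀ (n : ℕ) (Gs : ℕ → Subgroup G) (f : Finset ℕ → G), PolyAux n Gs f →
    ∀ (k : ℕ) (a : Finset ℕ) (b : Fin k → Finset ℕ), (∀ i, Disjoint a (b i)) →
    (Pairwise fun i j => Disjoint (b i) (b j)) →
    (fun ω : Fin k → Bool => f (a ∪ (Finset.univ.filter fun i => ω i = true).biUnion b))
      ∈ HKGroup k Gs := by
  intro n
  induction n with
  | zero =>
    intro Gs f hf k a b _ _
    have he : (fun ω : Fin k → Bool =>
        f (a ∪ (Finset.univ.filter fun i => ω i = true).biUnion b)) =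
        (1 : (Fin k → Bool) → G) := funext fun ω => hf.2 _
    rw [he]; exact one_mem _
  | succ n ihn =>
    intro Gs f hf
    obtain ⟨hf0, hfD⟩ := hf
    intro k
    induction k with
    | zero =>
      intro a b _ _
      have key : (fun ω : Fin 0 → Bool =>
          f (a ∪ (Finset.univ.filter fun i => ω i = true).biUnion b)) =
          cubeGen (fun _ => false) (f a) := by
        funext σ
        have he : a ∪ (Finset.univ.filter fun i => σ i = true).biUnion b = a := by simp
        rw [he]
        simp [cubeGen]
      rw [key]
      exact cubeGen_mem (by rw [cubeWeight_zero]; exact hf0 a)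
    | succ k ihk =>
      intro a b hab hbb
      have hab' : ∀ j : Fin k, Disjoint a (b j.castSucc) := fun j => hab _
      have hbb' : Pairwise fun i j : Fin k => Disjoint (b i.castSucc) (b j.castSucc) :=
        fun i j hij => hbb ((Fin.castSucc_injective k).ne hij)
      have hdisj : ∀ ω : Fin k → Bool,
          Disjoint (a ∪ (Finset.univ.filter fun i => ω i = true).biUnion fun j => b j.castSucc)
            (b (Fin.last k)) := by
        intro ω
        rw [Finset.disjoint_union_left]
        refine ⟨hab _, ?_⟩
        rw [Finset.disjoint_biUnion_left]
        intro j _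
        exact hbb (Fin.castSucc_lt_last j).ne
      have base : (fun ω : Fin k → Bool =>
          f (a ∪ (Finset.univ.filter fun i => ω i = true).biUnion fun j => b j.castSucc))
          ∈ HKGroup k Gs := ihk a (fun j => b j.castSucc) hab' hbb'
      rcases (b (Fin.last k)).eq_empty_or_nonempty with hβ | hβ
      · have key : (fun σ : Fin (k + 1) → Bool =>
            f (a ∪ (Finset.univ.filter fun i => σ i = true).biUnion b)) =
            ιf (fun ω : Fin k → Bool =>
              f (a ∪ (Finset.univ.filter fun i => ω i = true).biUnion fun j => b j.castSucc)) := by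
          funext σ
          rw [cube_set_eq σ a b, hβ]
          simp [ιf]
        rw [key]
        exact ιf_mem base
      · obtain ⟨Df, hDf, hDfeq⟩ := hfD (b (Fin.last k)) hβ
        have upmem : (fun ω : Fin k → Bool =>
            Df (a ∪ (Finset.univ.filter fun i => ω i = true).biUnion fun j => b j.castSucc))
            ∈ HKGroup k (fun i => Gs (i + 1)) :=
          ihn (fun i => Gs (i + 1)) Df hDf k a (fun j => b j.castSucc) hab' hbb'
        have key : (fun σ : Fin (k + 1) → Bool =>
            f (a ∪ (Finset.univ.filter fun i => σ i = true).biUnion b)) =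
            ιf (fun ω : Fin k → Bool =>
              f (a ∪ (Finset.univ.filter fun i => ω i = true).biUnion fun j => b j.castSucc)) *
            upf (fun ω : Fin k → Bool =>
              Df (a ∪ (Finset.univ.filter fun i => ω i = true).biUnion fun j => b j.castSucc)) := by
          funext σ
          rw [cube_set_eq σ a b]
          by_cases hl : σ (Fin.last k) = true
          · rw [if_pos hl]
            have hd := hDfeq _ (hdisj (Fin.init σ))
            simp only [Pi.mul_apply, ιf, upf, if_pos hl]
            rw [hd]; group
          · rw [if_neg hl, Finset.union_empty]
            simp only [Pi.mul_apply, ιf, upf, if_neg hl, mul_one]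
        rw [key]
        exact mul_mem (ιf_mem base) (upf_mem upmem)

lemma sdiff_cube {k : ℕ} (a β : Finset ℕ) (b : Fin k → Finset ℕ) (ω : Fin k → Bool) :
    (a ∪ (Finset.univ.filter fun i => ω i = true).biUnion b) \ β =
      (a \ β) ∪ (Finset.univ.filter fun i => ω i = true).biUnion fun i => b i \ β := by
  ext x
  simp only [Finset.mem_sdiff, Finset.mem_union, Finset.mem_biUnion, Finset.mem_filter,
    Finset.mem_univ, true_and]
  tauto

lemma cube_to_poly : ∀ (n : ℕ) (Gs : ℕ → Subgroup G) (f : Finset ℕ → G),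
    Antitone Gs → (∀ i j, ⁅Gs i, Gs j⁆ ≤ Gs (i + j)) → Gs n = ⊥ →
    (∀ (k : ℕ) (a : Finset ℕ) (b : Fin k → Finset ℕ), (∀ i, Disjoint a (b i)) →
      (Pairwise fun i j => Disjoint (b i) (b j)) →
      (fun ω : Fin k → Bool => f (a ∪ (Finset.univ.filter fun i => ω i = true).biUnion b))
        ∈ HKGroup k Gs) →
    PolyAux n Gs f := by
  intro n
  induction n with
  | zero =>
    intro Gs f hanti hcomm hbot hcube
    refine ⟨hbot, fun α => ?_⟩
    have h0 := hcube 0 α (fun i => i.elim0) (fun i => i.elim0) (by intro i j h; exact i.elim0)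
    have hv := HK_zero_eval h0 (fun i => i.elim0)
    simp only [Finset.univ_eq_empty, Finset.filter_empty, Finset.biUnion_empty,
      Finset.union_empty, hbot, Subgroup.mem_bot] at hv
    exact hv
  | succ n ihn =>
    intro Gs f hanti hcomm hbot hcube
    refine ⟨fun α => ?_, fun β hβ => ?_⟩
    · have h0 := hcube 0 α (fun i => i.elim0) (fun i => i.elim0) (by intro i j h; exact i.elim0)
      have hv := HK_zero_eval h0 (fun i => i.elim0)
      simpa using hv
    · refine ⟨fun α => (f (α \ β))⁻¹ * f (α ∪ β), ?_, fun α hα => ?_⟩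
      · refine ihn (fun i => Gs (i + 1)) _ (fun i j hij => hanti (by omega))
          (fun i j => le_trans (hcomm (i + 1) (j + 1)) (hanti (by omega))) hbot ?_
        intro k a b hab hbb
        have hab'' : ∀ i : Fin (k + 1), Disjoint (a \ β)
            ((Fin.snoc (fun i => b i \ β) β : Fin (k + 1) → Finset ℕ) i) := by
          intro i
          refine Fin.lastCases (motive := fun i => Disjoint (a \ β)
            ((Fin.snoc (fun i => b i \ β) β : Fin (k + 1) → Finset ℕ) i)) ?_ (fun j => ?_) i
          · show Disjoint (a \ β) ((Fin.snoc (fun i => b i \ β) β : Fin (k + 1) → Finset ℕ)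
              (Fin.last k))
            rw [Fin.snoc_last]; exact Finset.sdiff_disjoint
          · show Disjoint (a \ β) ((Fin.snoc (fun i => b i \ β) β : Fin (k + 1) → Finset ℕ)
              j.castSucc)
            rw [Fin.snoc_castSucc]
            exact (hab j).mono Finset.sdiff_subset Finset.sdiff_subset
        have hbb'' : Pairwise fun i j : Fin (k + 1) =>
            Disjoint ((Fin.snoc (fun i => b i \ β) β : Fin (k + 1) → Finset ℕ) i)
              ((Fin.snoc (fun i => b i \ β) β : Fin (k + 1) → Finset ℕ) j) := by
          intro i j hij
          rcases Fin.eq_castSucc_or_eq_last i with ⟨i', rfl⟩ | rfl <;>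
            rcases Fin.eq_castSucc_or_eq_last j with ⟨j', rfl⟩ | rfl
          · rw [Fin.snoc_castSucc, Fin.snoc_castSucc]
            exact (hbb fun h => hij (congrArg Fin.castSucc h)).mono
              Finset.sdiff_subset Finset.sdiff_subset
          · rw [Fin.snoc_castSucc, Fin.snoc_last]; exact Finset.sdiff_disjoint
          · rw [Fin.snoc_last, Fin.snoc_castSucc]; exact Finset.sdiff_disjoint.symm
          · exact absurd rfl hij
        have hc := hcube (k + 1) (a \ β) (Fin.snoc (fun i => b i \ β) β) hab'' hbb''
        obtain ⟨c₀, h₀, c₁, h₁, hsplit⟩ := HK_split hanti hcomm hc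
        have key : (fun ω : Fin k → Bool =>
            (f ((a ∪ (Finset.univ.filter fun i => ω i = true).biUnion b) \ β))⁻¹ *
              f ((a ∪ (Finset.univ.filter fun i => ω i = true).biUnion b) ∪ β)) = c₁ := by
          funext ω
          have e0 : f ((a \ β) ∪ (Finset.univ.filter fun i =>
              (Fin.snoc ω false : Fin (k + 1) → Bool) i = true).biUnion
                (Fin.snoc (fun i => b i \ β) β)) =
              (ιf c₀ * upf c₁) (Fin.snoc ω false) := congrFun hsplit _
          have e1 : f ((a \ β) ∪ (Finset.univ.filter fun i =>
              (Fin.snoc ω true : Fin (k + 1) → Bool) i = true).biUnion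
                (Fin.snoc (fun i => b i \ β) β)) =
              (ιf c₀ * upf c₁) (Fin.snoc ω true) := congrFun hsplit _
          rw [biUnion_filter_snoc] at e0 e1
          simp only [Pi.mul_apply, ιf, upf, Fin.init_snoc, Fin.snoc_last, Fin.snoc_castSucc,
            if_true, Finset.union_empty, mul_one] at e0 e1
          simp at e0 e1
          have h1 : (a ∪ (Finset.univ.filter fun i => ω i = true).biUnion b) \ β =
              (a \ β) ∪ (Finset.univ.filter fun i => ω i = true).biUnion fun i => b i \ β :=
            sdiff_cube a β b ω
          have h2 : (a ∪ (Finset.univ.filter fun i => ω i = true).biUnion b) ∪ β =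
              ((a \ β) ∪ ((Finset.univ.filter fun i => ω i = true).biUnion fun i => b i \ β)) ∪ β := by
            rw [← h1, Finset.sdiff_union_self_eq_union]
          rw [h1, h2]
          rw [← Finset.union_assoc] at e1
          rw [e1, e0]
          group
        show (fun ω : Fin k → Bool =>
            (f ((a ∪ (Finset.univ.filter fun i => ω i = true).biUnion b) \ β))⁻¹ *
              f ((a ∪ (Finset.univ.filter fun i => ω i = true).biUnion b) ∪ β)) ∈
          HKGroup k (fun i => Gs (i + 1))
        rw [key]
        exact h₁
      · have hs : α \ β = α := sdiff_eq_self_iff_disjoint.mpr hα.symm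
        show (f (α \ β))⁻¹ * f (α ∪ β) = (f α)⁻¹ * f (α ∪ β)
        rw [hs]
end S5

variable {E : Type*} [NormedAddCommGroup E] [NormedSpace ℝ E] [FiniteDimensional ℝ E]
  {G : Type*} [TopologicalSpace G] [ChartedSpace E G] [Group G] [IsTopologicalGroup G]
  [LieGroup (modelWithCornersSelf ℝ E) (⊤ : ℕ∞) G] [Group.IsNilpotent G]

/-- Let `G_•` be a `Γ`-rational filtration of length `d` on a nilpotent
finite-dimensional real Lie group `G`, with `Γ` discrete cocompact. A map `f : 𝓕∅ → G`
is polynomial with respect to `G_•` iff for every `k ≥ 1`, `f` maps every parallelepiped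
`(α_ω)_{ω ∈ {0,1}^k}` into the Host–Kra cube group `HK^k(G_•)`. -/
theorem statement5
    (d : ℕ) (Gs : ℕ → Subgroup G)
    (hanti : Antitone Gs) (hclosed : ∀ i, IsClosed (Gs i : Set G))
    (hcomm : ∀ i j, ⁅Gs i, Gs j⁆ ≤ Gs (i + j))
    (hfil0 : Gs 0 = ⊤) (hfil1 : Gs 1 = ⊤) (hlen : Gs (d + 1) = ⊥)
    (Γ : Subgroup G) [DiscreteTopology Γ] (hcocompact : CompactSpace (G ⧸ Γ))
    (hrat : ∀ i, CompactSpace (↥(Gs i) ⧸ Γ.subgroupOf (Gs i)))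
    (f : Finset ℕ → G) :
    IsPolySeq Gs f ↔
      ∀ k : ℕ, 1 ≤ k → ∀ A : (Fin k → Bool) → Finset ℕ, IsParallelepiped k A →
        (fun ω => f (A ω)) ∈ HKGroup k Gs := by
  constructor
  · rintro ⟨n, hn⟩ k hk A ⟨a, b, hab, hbb, hA⟩
    have h := S5.poly_cube n Gs f hn k a b hab hbb
    have he : (fun ω => f (A ω)) = fun ω : Fin k → Bool =>
        f (a ∪ (Finset.univ.filter fun i => ω i = true).biUnion b) := by
      funext ω; rw [hA ω]
    rw [he]; exact h
  · intro h
    refine ⟨d + 2, S5.cube_to_poly (d + 2) Gs f hanti hcomm ?_ ?_⟩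
    · have hle : Gs (d + 2) ≤ ⊥ := hlen ▸ hanti (by omega)
      exact le_bot_iff.mp hle
    · intro k a b hab hbb
      cases k with
      | zero =>
        have key : (fun ω : Fin 0 → Bool =>
            f (a ∪ (Finset.univ.filter fun i => ω i = true).biUnion b)) =
            S5.cubeGen (fun _ => false) (f a) := by
          funext σ
          have he : a ∪ (Finset.univ.filter fun i => σ i = true).biUnion b = a := by simp
          rw [he]; simp [S5.cubeGen]
        rw [key]
        refine S5.cubeGen_mem ?_
        rw [S5.cubeWeight_zero, hfil0]; trivial
      | succ k =>
        exact h (k + 1) (by omega) _ ⟨a, b, hab, hbb, fun ω => rfl⟩
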